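/- For every integer θ ≥ 1, sup_{γ > 0} |Bin(κ, γ/κ, θ) − Poisson(γ,θ)| → 0 as the integer κ → ∞; that is, the binomial tail Bin(κ, γ/κ, θ) converges to the Poisson tail Poisson(γ,θ) uniformly in γ > 0. -/

import Mathlib

/-- Bin(κ,x,θ) = ∑_{i=θ}^{κ} (κ choose i) x^i (1−x)^{κ−i}. -/
noncomputable def binTail (κ : ℕ) (x : ℝ) (θ : ℕ) : ℝ :=
  ∑ i ∈ Finset.Icc θ κ, (κ.choose i : ℝ) * x ^ i * (1 - x) ^ (κ - i)

/-- Bin with the convention Bin(κ,x,θ) = 1 for x > 1. -/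
noncomputable def binTailExt (κ : ℕ) (x : ℝ) (θ : ℕ) : ℝ :=
  if x ≤ 1 then binTail κ x θ else 1

/-- Poisson(γ,θ) = ∑_{i=θ}^{∞} e^{−γ} γ^i / i!. -/
noncomputable def poissonTail (γ : ℝ) (θ : ℕ) : ℝ :=
  ∑' i : ℕ, Real.exp (-γ) * γ ^ (θ + i) / (θ + i).factorial


open Finset


-- a^(n+1) - b^(n+1) ≤ (n+1) a^n (a-b) for 0 ≤ b ≤ a
lemma aux_pow_sub_pow (a b : ℝ) (hb : 0 ≤ b) (hba : b ≤ a) :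
    ∀ n : ℕ, a ^ (n+1) - b ^ (n+1) ≤ (n+1 : ℝ) * a ^ n * (a - b) := by
  intro n
  induction n with
  | zero => simp
  | succ n ih =>
    have ha : 0 ≤ a := hb.trans hba
    have hbn : b ^ (n+1) ≤ a ^ (n+1) := pow_le_pow_left₀ hb hba _
    have h1 : a ^ (n+2) - b ^ (n+2)
        = a * (a ^ (n+1) - b ^ (n+1)) + b ^ (n+1) * (a - b) := by ring
    have h2 : a * (a ^ (n+1) - b ^ (n+1)) ≤ a * ((n+1 : ℝ) * a ^ n * (a - b)) := by
      apply mul_le_mul_of_nonneg_left ih ha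
    have h3 : b ^ (n+1) * (a - b) ≤ a ^ (n+1) * (a - b) := by
      apply mul_le_mul_of_nonneg_right hbn (by linarith)
    calc a ^ (n+2) - b ^ (n+2) ≤ a * ((n+1 : ℝ) * a ^ n * (a - b)) + a ^ (n+1) * (a - b) := by
          rw [h1]; exact add_le_add h2 h3
      _ = (n+2 : ℝ) * a ^ (n+1) * (a - b) := by ring
      _ = ((n+1 : ℕ)+1 : ℝ) * a ^ (n+1) * (a - b) := by push_cast; ring

-- e^{-t} ≤ 1 - t + t² for t ≥ 0
lemma aux_exp_neg_le (t : ℝ) (ht : 0 ≤ t) : Real.exp (-t) ≤ 1 - t + t ^ 2 := by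
  have h1 : t + 1 ≤ Real.exp t := Real.add_one_le_exp t
  have h2 : Real.exp (-t) * Real.exp t = 1 := by
    rw [← Real.exp_add]; simp
  nlinarith [Real.exp_pos t, Real.exp_pos (-t), sq_nonneg t, sq_nonneg (t - 1)]

-- x^m ≤ m! e^x for x ≥ 0
lemma aux_pow_le_fact_exp (m : ℕ) (x : ℝ) (hx : 0 ≤ x) :
    x ^ m ≤ (m.factorial : ℝ) * Real.exp x := by
  have h := Real.sum_le_exp_of_nonneg hx (m+1)
  have h2 : x ^ m / (m.factorial : ℝ) ≤ ∑ i ∈ range (m+1), x ^ i / i.factorial := by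
    exact Finset.single_le_sum (f := fun i => x ^ i / (i.factorial : ℝ))
      (fun i _ => by positivity) (self_mem_range_succ m)
  have hm : (0:ℝ) < m.factorial := by exact_mod_cast m.factorial_pos
  rw [div_le_iff₀ hm] at h2
  calc x ^ m ≤ (∑ i ∈ range (m+1), x ^ i / i.factorial) * m.factorial := h2
    _ ≤ Real.exp x * m.factorial := mul_le_mul_of_nonneg_right h hm.le
    _ = (m.factorial : ℝ) * Real.exp x := by ring

-- γ^m e^{-γ/2} ≤ 2^m m!
lemma aux_pow_exp (m : ℕ) (γ : ℝ) (h : 0 ≤ γ) :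
    γ ^ m * Real.exp (-(γ/2)) ≤ (2:ℝ) ^ m * m.factorial := by
  have h1 : (γ/2) ^ m ≤ (m.factorial : ℝ) * Real.exp (γ/2) :=
    aux_pow_le_fact_exp m (γ/2) (by positivity)
  have h2 : γ ^ m = (2:ℝ) ^ m * (γ/2) ^ m := by
    rw [← mul_pow]; ring_nf
  have h3 : Real.exp (γ/2) * Real.exp (-(γ/2)) = 1 := by
    rw [← Real.exp_add]; simp
  have he : (0:ℝ) < Real.exp (-(γ/2)) := Real.exp_pos _
  calc γ ^ m * Real.exp (-(γ/2)) = (2:ℝ) ^ m * ((γ/2) ^ m * Real.exp (-(γ/2))) := by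
        rw [h2]; ring
    _ ≤ (2:ℝ) ^ m * ((m.factorial : ℝ) * Real.exp (γ/2) * Real.exp (-(γ/2))) := by
        apply mul_le_mul_of_nonneg_left _ (by positivity)
        exact mul_le_mul_of_nonneg_right h1 he.le
    _ = (2:ℝ) ^ m * m.factorial := by rw [mul_assoc ((m.factorial : ℝ)), h3, mul_one]

-- e^x - 1 ≤ x e^x for x ≥ 0
lemma aux_exp_sub_one (x : ℝ) (hx : 0 ≤ x) : Real.exp x - 1 ≤ x * Real.exp x := by
  have h1 : -x + 1 ≤ Real.exp (-x) := Real.add_one_le_exp (-x)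
  have h2 : Real.exp (-x) * Real.exp x = 1 := by rw [← Real.exp_add]; simp
  nlinarith [Real.exp_pos x]

-- choose bounds
lemma aux_choose_upper (κ i : ℕ) : (κ.choose i : ℝ) * i.factorial ≤ (κ:ℝ) ^ i := by
  have h := Nat.descFactorial_le_pow κ i
  have h2 : κ.descFactorial i = i.factorial * κ.choose i := Nat.descFactorial_eq_factorial_mul_choose κ i
  rw [h2] at h
  rw [mul_comm]
  exact_mod_cast h

lemma aux_choose_lower (κ i : ℕ) : ((κ - i : ℕ) : ℝ) ^ i ≤ (κ.choose i : ℝ) * i.factorial := by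
  have h := Nat.pow_sub_le_descFactorial κ i
  have h2 : κ.descFactorial i = i.factorial * κ.choose i := Nat.descFactorial_eq_factorial_mul_choose κ i
  have h3 : (κ - i) ^ i ≤ (κ + 1 - i) ^ i := Nat.pow_le_pow_left (by omega) i
  rw [h2] at h
  have : (κ - i) ^ i ≤ i.factorial * κ.choose i := h3.trans h
  rw [mul_comm]
  exact_mod_cast this

lemma binTail_eq (κ θ : ℕ) (h : θ ≤ κ) (x : ℝ) :
    binTail κ x θ = 1 - ∑ i ∈ range θ, (κ.choose i : ℝ) * x ^ i * (1 - x) ^ (κ - i) := by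
  have htot : ∑ i ∈ range (κ + 1), (κ.choose i : ℝ) * x ^ i * (1 - x) ^ (κ - i) = 1 := by
    have := add_pow x (1 - x) κ
    simp only [add_sub_cancel, one_pow] at this
    calc ∑ i ∈ range (κ + 1), (κ.choose i : ℝ) * x ^ i * (1 - x) ^ (κ - i)
        = ∑ m ∈ range (κ + 1), x ^ m * (1 - x) ^ (κ - m) * (κ.choose m : ℝ) := by
          apply Finset.sum_congr rfl; intro i _; ring
      _ = 1 := this.symm
  have hsplit : ∑ i ∈ Finset.Ico 0 θ, (κ.choose i : ℝ) * x ^ i * (1 - x) ^ (κ - i)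
      + ∑ i ∈ Finset.Ico θ (κ+1), (κ.choose i : ℝ) * x ^ i * (1 - x) ^ (κ - i)
      = ∑ i ∈ Finset.Ico 0 (κ+1), (κ.choose i : ℝ) * x ^ i * (1 - x) ^ (κ - i) :=
    Finset.sum_Ico_consecutive _ (Nat.zero_le _) (by omega)
  rw [← Finset.range_eq_Ico, ← Finset.range_eq_Ico] at hsplit
  rw [htot] at hsplit
  rw [binTail, ← Finset.Ico_add_one_right_eq_Icc]
  linarith

lemma poissonTail_eq (γ : ℝ) (θ : ℕ) :
    poissonTail γ θ = 1 - ∑ i ∈ range θ, Real.exp (-γ) * γ ^ i / i.factorial := by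
  have hs : Summable (fun i : ℕ => Real.exp (-γ) * γ ^ i / i.factorial) := by
    simpa [mul_div_assoc] using (Real.summable_pow_div_factorial γ).mul_left (Real.exp (-γ))
  have htot : ∑' i : ℕ, Real.exp (-γ) * γ ^ i / i.factorial = 1 := by
    rw [show (fun i : ℕ => Real.exp (-γ) * γ ^ i / i.factorial)
        = fun i : ℕ => Real.exp (-γ) * (γ ^ i / i.factorial) by funext i; ring]
    rw [tsum_mul_left]
    have : ∑' i : ℕ, γ ^ i / (i.factorial : ℝ) = Real.exp γ := by
      rw [Real.exp_eq_exp_ℝ, NormedSpace.exp_eq_tsum_div]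
    rw [this, ← Real.exp_add]
    simp
  have hadd := hs.sum_add_tsum_nat_add θ
  have : poissonTail γ θ = ∑' i : ℕ, Real.exp (-γ) * γ ^ (i + θ) / (i + θ).factorial := by
    unfold poissonTail
    congr 1; funext i; rw [add_comm θ i]
  rw [this]
  have := hadd
  -- hadd : ∑ i in range θ, f i + ∑' i, f (i + θ) = ∑' i, f i
  rw [htot] at hadd
  linarith

set_option maxHeartbeats 1000000 in
lemma key_est (i κ : ℕ) (hκ : 2 * (i + 1) ≤ κ) (γ : ℝ) (h0 : 0 < γ) (h1 : γ ≤ κ) :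
    |(κ.choose i : ℝ) * (γ/κ) ^ i * (1 - γ/κ) ^ (κ - i) - Real.exp (-γ) * γ ^ i / i.factorial|
      ≤ ((2:ℝ)^i * i^2 + 2^(i+2) * (i+2).factorial + (i:ℝ) * 2^(i+1) * (i+1).factorial) / κ := by
  have hiκ : i ≤ κ := by omega
  have hκ0 : (0:ℝ) < κ := by
    have : 0 < κ := by omega
    exact_mod_cast this
  set t : ℝ := γ / κ with ht_def
  have ht0 : 0 < t := by positivity
  have ht1 : t ≤ 1 := by rw [ht_def, div_le_one hκ0]; exact h1
  have hb0 : (0:ℝ) ≤ 1 - t := by linarith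
  have hF0 : (0:ℝ) < (i.factorial : ℝ) := by exact_mod_cast i.factorial_pos
  have hF1 : (1:ℝ) ≤ (i.factorial : ℝ) := by exact_mod_cast i.factorial_pos
  set F : ℝ := (i.factorial : ℝ) with hF_def
  set R : ℝ := (κ.choose i : ℝ) / κ ^ i with hR_def
  set B : ℝ := (1 - t) ^ (κ - i) with hB_def
  have hκi0 : (0:ℝ) < (κ:ℝ) ^ i := by positivity
  have hB0 : 0 ≤ B := pow_nonneg hb0 _
  -- R bounds
  have hRu : R ≤ 1 / F := by
    rw [hR_def, div_le_div_iff₀ hκi0 hF0]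
    have := aux_choose_upper κ i
    linarith
  have hRl : 1 / F - (i:ℝ)^2 / (κ * F) ≤ R := by
    have hc := aux_choose_lower κ i
    have hcast : ((κ - i : ℕ) : ℝ) = (κ:ℝ) - i := by
      push_cast [Nat.cast_sub hiκ]; ring
    rw [hcast] at hc
    have hiκ' : (i:ℝ) / κ ≤ 1 := by
      rw [div_le_one hκ0]; exact_mod_cast hiκ
    have hbern : 1 + (i:ℝ) * (-(i / κ)) ≤ (1 + (-((i:ℝ) / κ))) ^ i :=
      one_add_mul_le_pow (by linarith) i
    have hsub : ((κ:ℝ) - i) ^ i = (κ:ℝ)^i * (1 + (-((i:ℝ) / κ))) ^ i := by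
      rw [← mul_pow]; congr 1; field_simp; ring
    have h5 : (κ:ℝ)^i * (1 - (i:ℝ)^2 / κ) ≤ ((κ:ℝ) - i) ^ i := by
      rw [hsub]
      apply mul_le_mul_of_nonneg_left _ hκi0.le
      calc 1 - (i:ℝ)^2 / κ = 1 + (i:ℝ) * (-(i / κ)) := by ring
        _ ≤ _ := hbern
    have h6 : (κ:ℝ)^i * (1 - (i:ℝ)^2 / κ) ≤ (κ.choose i : ℝ) * F := le_trans h5 hc
    have h7 : (1 - (i:ℝ)^2 / κ) / F ≤ R := by
      rw [hR_def, div_le_div_iff₀ hF0 hκi0]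
      nlinarith [h6]
    calc 1/F - (i:ℝ)^2/(κ*F) = (1 - (i:ℝ)^2/κ)/F := by
          field_simp
      _ ≤ R := h7
  have hRabs : |R - 1/F| ≤ (i:ℝ)^2 / (κ * F) := by
    have hpos : (0:ℝ) ≤ (i:ℝ)^2 / (κ*F) := by positivity
    rw [abs_le]
    exact ⟨by linarith, by linarith⟩
  -- rewrite lhs
  have hlhs : (κ.choose i : ℝ) * (γ/κ) ^ i * (1 - γ/κ) ^ (κ - i)
      = γ ^ i * R * B := by
    rw [hR_def, hB_def, div_pow]
    ring
  -- bound γ^i * B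
  have hexp1 : 1 - t ≤ Real.exp (-t) := by
    have := Real.add_one_le_exp (-t); linarith
  have hBexp : B ≤ Real.exp (-(((κ:ℝ) - i) * t)) := by
    rw [hB_def]
    calc (1-t)^(κ-i) ≤ (Real.exp (-t))^(κ-i) := pow_le_pow_left₀ hb0 hexp1 _
      _ = Real.exp (-t * (κ - i : ℕ)) := by
          rw [← Real.exp_nat_mul]; ring_nf
      _ = Real.exp (-(((κ:ℝ) - i) * t)) := by
          congr 1
          rw [Nat.cast_sub hiκ]; ring
  have hhalf : γ / 2 ≤ ((κ:ℝ) - i) * t := by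
    have h2i : 2 * (i:ℝ) ≤ κ := by
      have : 2 * i ≤ κ := by omega
      exact_mod_cast this
    have hid : ((κ:ℝ) - i) * t - γ/2 = γ * (2*((κ:ℝ)-i) - κ) / (2*κ) := by
      rw [ht_def]; field_simp
    have hnn : 0 ≤ γ * (2*((κ:ℝ)-i) - κ) / (2*κ) := by
      apply div_nonneg _ (by positivity)
      apply mul_nonneg h0.le
      linarith
    linarith
  have hBexp2 : B ≤ Real.exp (-(γ/2)) :=
    hBexp.trans (by apply Real.exp_le_exp.2; linarith)
  have hgB : γ ^ i * B ≤ (2:ℝ)^i * i.factorial := by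
    calc γ ^ i * B ≤ γ ^ i * Real.exp (-(γ/2)) := by
          apply mul_le_mul_of_nonneg_left hBexp2 (by positivity)
      _ ≤ (2:ℝ)^i * i.factorial := aux_pow_exp i γ h0.le
  -- bound |B - exp(-γ)|
  obtain ⟨m, hm⟩ : ∃ m, κ - i = m + 1 := ⟨κ - i - 1, by omega⟩
  set a : ℝ := Real.exp (-t) with ha_def
  have ha0 : 0 ≤ a := (Real.exp_pos _).le
  have haB : B ≤ a ^ (κ - i) := by
    rw [hB_def]; exact pow_le_pow_left₀ hb0 hexp1 _
  have han : a ^ (κ - i) = Real.exp (-(((κ:ℝ) - i) * t)) := by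
    rw [ha_def, ← Real.exp_nat_mul]
    congr 1
    rw [Nat.cast_sub hiκ]; ring
  have hαpre : a ^ (κ - i) - B ≤ ((κ:ℝ) - i) * a ^ m * t^2 := by
    have hab : a - (1 - t) ≤ t^2 := by
      have := aux_exp_neg_le t ht0.le
      rw [ha_def]; linarith
    have := aux_pow_sub_pow a (1 - t) hb0 hexp1 m
    rw [← hm] at this
    have ham : 0 ≤ a ^ m := pow_nonneg ha0 m
    have hcast : ((m:ℝ) + 1) = ((κ:ℝ) - i) := by
      have : (κ - i : ℕ) = m + 1 := hm
      have h2 : ((κ - i : ℕ) : ℝ) = (m:ℝ) + 1 := by exact_mod_cast this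
      rw [Nat.cast_sub hiκ] at h2
      linarith
    calc a ^ (κ - i) - B ≤ ((m:ℝ)+1) * a ^ m * (a - (1-t)) := this
      _ ≤ ((m:ℝ)+1) * a ^ m * t^2 := by
          apply mul_le_mul_of_nonneg_left hab
          positivity
      _ = ((κ:ℝ) - i) * a ^ m * t^2 := by rw [hcast]
  have ham_exp : a ^ m = Real.exp (-((m:ℝ) * t)) := by
    rw [ha_def, ← Real.exp_nat_mul]; ring_nf
  have hm_half : γ / 2 ≤ (m:ℝ) * t := by
    have hmval : (m:ℝ) = (κ:ℝ) - i - 1 := by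
      have : (κ - i : ℕ) = m + 1 := hm
      have h2 : ((κ - i : ℕ) : ℝ) = (m:ℝ) + 1 := by exact_mod_cast this
      rw [Nat.cast_sub hiκ] at h2
      linarith
    have h2i : 2 * ((i:ℝ) + 1) ≤ κ := by exact_mod_cast hκ
    have hid : (m:ℝ) * t - γ/2 = γ * (2*(m:ℝ) - κ) / (2*κ) := by
      rw [ht_def]; field_simp
    have hnn : 0 ≤ γ * (2*(m:ℝ) - κ) / (2*κ) := by
      apply div_nonneg _ (by positivity)
      apply mul_nonneg h0.le
      rw [hmval]; linarith
    linarith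
  have ham_le : a ^ m ≤ Real.exp (-(γ/2)) := by
    rw [ham_exp]; apply Real.exp_le_exp.2; linarith
  have hα : γ ^ i * (a ^ (κ - i) - B) ≤ (2:ℝ)^(i+2) * (i+2).factorial / κ := by
    have hnt2 : ((κ:ℝ) - i) * t^2 ≤ γ^2 / κ := by
      have hle : (κ:ℝ) - i ≤ κ := by
        have : (0:ℝ) ≤ i := by positivity
        linarith
      have ht2 : t^2 = γ^2 / κ^2 := by rw [ht_def, div_pow]
      rw [ht2]
      calc ((κ:ℝ) - i) * (γ^2/κ^2) ≤ (κ:ℝ) * (γ^2/κ^2) :=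
            mul_le_mul_of_nonneg_right hle (by positivity)
        _ = γ^2 / κ := by field_simp
    calc γ ^ i * (a ^ (κ - i) - B) ≤ γ ^ i * (((κ:ℝ) - i) * a ^ m * t^2) := by
          apply mul_le_mul_of_nonneg_left hαpre (by positivity)
      _ = γ ^ i * (((κ:ℝ) - i) * t^2) * a ^ m := by ring
      _ ≤ γ ^ i * (γ^2/κ) * Real.exp (-(γ/2)) := by
          apply mul_le_mul
          · apply mul_le_mul_of_nonneg_left hnt2 (by positivity)
          · exact ham_le
          · positivity
          · positivity
      _ = (γ ^ (i+2) * Real.exp (-(γ/2))) / κ := by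
          rw [pow_add]; ring
      _ ≤ (2:ℝ)^(i+2) * (i+2).factorial / κ :=
          (div_le_div_iff_of_pos_right hκ0).2 (aux_pow_exp (i+2) γ h0.le)
  -- β bound
  have hexpγ : Real.exp (-γ) ≤ a ^ (κ - i) := by
    rw [han]
    apply Real.exp_le_exp.2
    have : ((κ:ℝ) - i) * t ≤ γ := by
      rw [ht_def]
      have hexpand : ((κ:ℝ) - i) * (γ/κ) = γ - (i:ℝ)*γ/κ := by field_simp
      rw [hexpand]
      have : 0 ≤ (i:ℝ)*γ/κ := by positivity
      linarith
    linarith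
  have hβ : γ ^ i * (a ^ (κ - i) - Real.exp (-γ)) ≤ (i:ℝ) * 2^(i+1) * (i+1).factorial / κ := by
    set x : ℝ := (i:ℝ) * t with hx_def
    have hx0 : 0 ≤ x := by positivity
    have hgap : a ^ (κ - i) = Real.exp (-γ) * Real.exp x := by
      rw [han, ← Real.exp_add]
      congr 1
      rw [hx_def, ht_def]
      field_simp
      ring
    have hsub1 : Real.exp x - 1 ≤ x * Real.exp x := aux_exp_sub_one x hx0
    have hxb : x ≤ γ / 2 := by
      have h2i : 2 * (i:ℝ) ≤ κ := by
        have : 2 * i ≤ κ := by omega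
        exact_mod_cast this
      have hid : γ/2 - x = γ * ((κ:ℝ) - 2*i) / (2*κ) := by
        rw [hx_def, ht_def]; field_simp
      have hnn : 0 ≤ γ * ((κ:ℝ) - 2*i) / (2*κ) :=
        div_nonneg (mul_nonneg h0.le (by linarith)) (by positivity)
      linarith
    have hstep : a ^ (κ - i) - Real.exp (-γ) ≤ x * Real.exp (x - γ) := by
      rw [hgap]
      calc Real.exp (-γ) * Real.exp x - Real.exp (-γ)
          = Real.exp (-γ) * (Real.exp x - 1) := by ring
        _ ≤ Real.exp (-γ) * (x * Real.exp x) := by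
            apply mul_le_mul_of_nonneg_left hsub1 (Real.exp_pos _).le
        _ = x * (Real.exp (-γ) * Real.exp x) := by ring
        _ = x * Real.exp (x - γ) := by rw [← Real.exp_add]; ring_nf
    have hxe : x * Real.exp (x - γ) ≤ x * Real.exp (-(γ/2)) := by
      apply mul_le_mul_of_nonneg_left _ hx0
      apply Real.exp_le_exp.2
      linarith
    calc γ ^ i * (a ^ (κ - i) - Real.exp (-γ)) ≤ γ ^ i * (x * Real.exp (-(γ/2))) := by
          apply mul_le_mul_of_nonneg_left (hstep.trans hxe) (by positivity)
      _ = (i:ℝ) / κ * (γ ^ (i+1) * Real.exp (-(γ/2))) := by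
          rw [hx_def, ht_def, pow_add]; ring
      _ ≤ (i:ℝ) / κ * ((2:ℝ)^(i+1) * (i+1).factorial) := by
          apply mul_le_mul_of_nonneg_left (aux_pow_exp (i+1) γ h0.le) (by positivity)
      _ = (i:ℝ) * 2^(i+1) * (i+1).factorial / κ := by ring
  -- assemble
  have hdecomp : (κ.choose i : ℝ) * (γ/κ) ^ i * (1 - γ/κ) ^ (κ - i) - Real.exp (-γ) * γ ^ i / F
      = γ ^ i * ((R - 1/F) * B) + γ ^ i / F * (B - Real.exp (-γ)) := by
    rw [hlhs]
    field_simp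
    ring
  have hq0 : (0:ℝ) ≤ γ ^ i := by positivity
  have habsB : |B - Real.exp (-γ)| ≤ (a ^ (κ - i) - B) + (a ^ (κ - i) - Real.exp (-γ)) := by
    rw [abs_le]
    exact ⟨by linarith [haB, hexpγ], by linarith [haB, hexpγ]⟩
  have hterm1 : |γ ^ i * ((R - 1/F) * B)| ≤ (2:ℝ)^i * i^2 / κ := by
    rw [abs_mul, abs_mul]
    rw [abs_of_nonneg hq0, abs_of_nonneg hB0]
    calc γ ^ i * (|R - 1/F| * B) = (γ ^ i * B) * |R - 1/F| := by ring
      _ ≤ ((2:ℝ)^i * i.factorial) * ((i:ℝ)^2 / (κ * F)) := by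
          apply mul_le_mul hgB hRabs (abs_nonneg _) (by positivity)
      _ = (2:ℝ)^i * (i:ℝ)^2 / κ * (i.factorial / F) := by field_simp
      _ = (2:ℝ)^i * (i:ℝ)^2 / κ := by rw [hF_def, div_self hF0.ne']; ring
  have hterm2 : |γ ^ i / F * (B - Real.exp (-γ))|
      ≤ ((2:ℝ)^(i+2) * (i+2).factorial + (i:ℝ) * 2^(i+1) * (i+1).factorial) / κ := by
    rw [abs_mul]
    have h1 : |γ ^ i / F| = γ ^ i / F := abs_of_nonneg (by positivity)
    rw [h1]
    calc γ ^ i / F * |B - Real.exp (-γ)|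
        ≤ γ ^ i / F * ((a ^ (κ - i) - B) + (a ^ (κ - i) - Real.exp (-γ))) := by
          apply mul_le_mul_of_nonneg_left habsB (by positivity)
      _ ≤ γ ^ i * ((a ^ (κ - i) - B) + (a ^ (κ - i) - Real.exp (-γ))) := by
          apply mul_le_mul_of_nonneg_right _ (by linarith [haB, hexpγ])
          rw [div_le_iff₀ hF0]
          nlinarith [hq0, hF1]
      _ = γ ^ i * (a ^ (κ - i) - B) + γ ^ i * (a ^ (κ - i) - Real.exp (-γ)) := by ring
      _ ≤ (2:ℝ)^(i+2) * (i+2).factorial / κ + (i:ℝ) * 2^(i+1) * (i+1).factorial / κ :=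
          add_le_add hα hβ
      _ = ((2:ℝ)^(i+2) * (i+2).factorial + (i:ℝ) * 2^(i+1) * (i+1).factorial) / κ := by ring
  calc |(κ.choose i : ℝ) * (γ/κ) ^ i * (1 - γ/κ) ^ (κ - i) - Real.exp (-γ) * γ ^ i / i.factorial|
      = |γ ^ i * ((R - 1/F) * B) + γ ^ i / F * (B - Real.exp (-γ))| := by rw [← hF_def, hdecomp]
    _ ≤ |γ ^ i * ((R - 1/F) * B)| + |γ ^ i / F * (B - Real.exp (-γ))| := abs_add_le _ _
    _ ≤ (2:ℝ)^i * i^2 / κ + ((2:ℝ)^(i+2) * (i+2).factorial + (i:ℝ) * 2^(i+1) * (i+1).factorial) / κ :=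
          add_le_add hterm1 hterm2
    _ = ((2:ℝ)^i * i^2 + 2^(i+2) * (i+2).factorial + (i:ℝ) * 2^(i+1) * (i+1).factorial) / κ := by
          ring

lemma aux_exp_neg_half_le (c : ℝ) (hc : 0 < c) : Real.exp (-(c/2)) ≤ 2 / c := by
  have h1 : c/2 ≤ Real.exp (c/2) := by
    have := Real.add_one_le_exp (c/2); linarith
  have h2 : (0:ℝ) < c/2 := by positivity
  have h3 : (Real.exp (c/2))⁻¹ ≤ (c/2)⁻¹ := by
    apply inv_anti₀ h2 h1
  rw [Real.exp_neg]
  calc (Real.exp (c/2))⁻¹ ≤ (c/2)⁻¹ := h3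
    _ = 2 / c := by rw [inv_div]

/-- Bin(κ, γ/κ, θ) → Poisson(γ,θ) as κ → ∞, uniformly in γ > 0. -/
theorem stmt6 (θ : ℕ) (hθ : 1 ≤ θ) :
    ∀ ε : ℝ, 0 < ε → ∃ K : ℕ, ∀ κ : ℕ, K ≤ κ → ∀ γ : ℝ, 0 < γ →
      |binTailExt κ (γ / κ) θ - poissonTail γ θ| < ε := by
  intro ε hε
  set C : ℝ := (∑ i ∈ range θ, ((2:ℝ)^i * i^2 + 2^(i+2) * (i+2).factorial
      + (i:ℝ) * 2^(i+1) * (i+1).factorial))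
      + ∑ i ∈ range θ, 2 * ((2:ℝ)^i * i.factorial) with hC_def
  have hC1 : (0:ℝ) ≤ ∑ i ∈ range θ, ((2:ℝ)^i * i^2 + 2^(i+2) * (i+2).factorial
      + (i:ℝ) * 2^(i+1) * (i+1).factorial) := by positivity
  have hC2 : (0:ℝ) ≤ ∑ i ∈ range θ, 2 * ((2:ℝ)^i * i.factorial) := by positivity
  have hC0 : 0 ≤ C := by rw [hC_def]; linarith
  obtain ⟨K0, hK0⟩ := exists_nat_gt (C / ε)
  refine ⟨max (2*θ+2) (K0+1), fun κ hκ γ hγ => ?_⟩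
  have hκθ : 2*θ+2 ≤ κ := le_trans (le_max_left _ _) hκ
  have hκK : K0+1 ≤ κ := le_trans (le_max_right _ _) hκ
  have hθκ : θ ≤ κ := by omega
  have hκ0 : (0:ℝ) < κ := by
    have : 0 < κ := by omega
    exact_mod_cast this
  have hCκ : C / κ < ε := by
    rw [div_lt_iff₀ hκ0]
    have h1 : C / ε < K0 + 1 := by
      have : (K0:ℝ) < K0 + 1 := by linarith
      linarith
    have h2 : ((K0:ℝ) + 1) ≤ κ := by exact_mod_cast hκK
    rw [div_lt_iff₀ hε] at h1
    nlinarith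
  suffices h : |binTailExt κ (γ / κ) θ - poissonTail γ θ| ≤ C / κ by linarith
  by_cases hcase : γ ≤ (κ:ℝ)
  · -- γ ≤ κ
    have hle : γ / κ ≤ 1 := (div_le_one hκ0).2 hcase
    rw [binTailExt, if_pos hle, binTail_eq κ θ hθκ, poissonTail_eq]
    have hre : (1 - ∑ i ∈ range θ, (κ.choose i : ℝ) * (γ/κ) ^ i * (1 - γ/κ) ^ (κ - i))
        - (1 - ∑ i ∈ range θ, Real.exp (-γ) * γ ^ i / i.factorial)
        = ∑ i ∈ range θ, (Real.exp (-γ) * γ ^ i / i.factorial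
            - (κ.choose i : ℝ) * (γ/κ) ^ i * (1 - γ/κ) ^ (κ - i)) := by
      rw [Finset.sum_sub_distrib]
      ring
    rw [hre]
    calc |∑ i ∈ range θ, (Real.exp (-γ) * γ ^ i / i.factorial
            - (κ.choose i : ℝ) * (γ/κ) ^ i * (1 - γ/κ) ^ (κ - i))|
        ≤ ∑ i ∈ range θ, |Real.exp (-γ) * γ ^ i / i.factorial
            - (κ.choose i : ℝ) * (γ/κ) ^ i * (1 - γ/κ) ^ (κ - i)| :=
          Finset.abs_sum_le_sum_abs _ _
      _ ≤ ∑ i ∈ range θ, ((2:ℝ)^i * i^2 + 2^(i+2) * (i+2).factorial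
            + (i:ℝ) * 2^(i+1) * (i+1).factorial) / κ := by
          apply Finset.sum_le_sum
          intro i hi
          rw [abs_sub_comm]
          apply key_est i κ _ γ hγ hcase
          have : i < θ := Finset.mem_range.1 hi
          omega
      _ = (∑ i ∈ range θ, ((2:ℝ)^i * i^2 + 2^(i+2) * (i+2).factorial
            + (i:ℝ) * 2^(i+1) * (i+1).factorial)) / κ := by rw [Finset.sum_div]
      _ ≤ C / κ := by
          apply (div_le_div_iff_of_pos_right hκ0).2
          rw [hC_def]
          linarith
  · -- γ > κ
    push_neg at hcase
    have hgt : ¬ (γ / κ ≤ 1) := by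
      rw [not_le, lt_div_iff₀ hκ0]
      linarith
    rw [binTailExt, if_neg hgt, poissonTail_eq]
    have hT0 : 0 ≤ ∑ i ∈ range θ, Real.exp (-γ) * γ ^ i / i.factorial := by
      apply Finset.sum_nonneg
      intro i _
      have := (Real.exp_pos (-γ)).le
      positivity
    have hre : (1:ℝ) - (1 - ∑ i ∈ range θ, Real.exp (-γ) * γ ^ i / i.factorial)
        = ∑ i ∈ range θ, Real.exp (-γ) * γ ^ i / i.factorial := by ring
    rw [hre, abs_of_nonneg hT0]
    have hterm : ∀ i ∈ range θ, Real.exp (-γ) * γ ^ i / i.factorial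
        ≤ 2 * ((2:ℝ)^i * i.factorial) / κ := by
      intro i _
      have hF1 : (1:ℝ) ≤ i.factorial := by exact_mod_cast i.factorial_pos
      have hsplit : Real.exp (-γ) = Real.exp (-(γ/2)) * Real.exp (-(γ/2)) := by
        rw [← Real.exp_add]; ring_nf
      have h1 : Real.exp (-γ) * γ ^ i / i.factorial ≤ γ ^ i * Real.exp (-(γ/2)) * Real.exp (-(γ/2)) := by
        rw [hsplit]
        rw [div_le_iff₀ (by exact_mod_cast i.factorial_pos : (0:ℝ) < i.factorial)]
        have hnn : 0 ≤ γ ^ i * Real.exp (-(γ/2)) * Real.exp (-(γ/2)) := by positivity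
        nlinarith [hnn, hF1]
      have h2 : γ ^ i * Real.exp (-(γ/2)) ≤ (2:ℝ)^i * i.factorial := aux_pow_exp i γ hγ.le
      have h3 : Real.exp (-(γ/2)) ≤ 2 / κ := by
        calc Real.exp (-(γ/2)) ≤ Real.exp (-((κ:ℝ)/2)) := by
              apply Real.exp_le_exp.2; linarith
          _ ≤ 2 / κ := aux_exp_neg_half_le κ hκ0
      calc Real.exp (-γ) * γ ^ i / i.factorial
          ≤ γ ^ i * Real.exp (-(γ/2)) * Real.exp (-(γ/2)) := h1
        _ ≤ ((2:ℝ)^i * i.factorial) * (2/κ) := by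
            apply mul_le_mul h2 h3 (Real.exp_pos _).le (by positivity)
        _ = 2 * ((2:ℝ)^i * i.factorial) / κ := by ring
    calc ∑ i ∈ range θ, Real.exp (-γ) * γ ^ i / i.factorial
        ≤ ∑ i ∈ range θ, 2 * ((2:ℝ)^i * i.factorial) / κ := Finset.sum_le_sum hterm
      _ = (∑ i ∈ range θ, 2 * ((2:ℝ)^i * i.factorial)) / κ := by rw [Finset.sum_div]
      _ ≤ C / κ := by
          apply (div_le_div_iff_of_pos_right hκ0).2
          rw [hC_def]
          linarith
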